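/- For every n ≥ 1, the identity ∏_{i=1}^{n} ∏_{j=0}^{∞} (1 + z x_i q^j) = Σ_μ q^{n(μ')} z^{|μ|} m_μ(x_1,…,x_n) / ∏_i (q;q)_{μ_i} holds in the formal power series ring ℚ[x_1,…,x_n][[q,z]], where the sum runs over all partitions μ with at most n parts and n(μ') = Σ_i μ_i(μ_i−1)/2. -/

import Mathlib

namespace KHL

/-- `conjC l j` is the `j`-th part (1-based) of the conjugate of the partition `l`. -/
def conjC (l : List ℕ) (j : ℕ) : ℕ := (l.filter (fun x => j ≤ x)).length

/-- `nstat λ = n(λ) = Σ_{i≥1} (i-1)·λ_i`. -/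
def nstat (l : List ℕ) : ℕ := ∑ i ∈ Finset.range l.length, i * l.getD i 0

/-- The Gaussian binomial coefficient `[n choose k]_q` as a polynomial in `ℤ[q]`. -/
noncomputable def qbinom : ℕ → ℕ → Polynomial ℤ
  | _, 0 => 1
  | 0, _ + 1 => 0
  | n + 1, k + 1 => qbinom n k + Polynomial.X ^ (k + 1) * qbinom n (k + 1)

/-- The finset of all partitions of `n`, as weakly decreasing lists of positive integers. -/
noncomputable def partitionsOf (n : ℕ) : Finset (List ℕ) :=
  Finset.image (fun p : Nat.Partition n => (Multiset.sort p.parts (· ≤ ·)).reverse) Finset.univ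

/-- The conjugate partition, as a list. -/
def conjList (l : List ℕ) : List ℕ := (List.range (l.headD 0)).map fun j => conjC l (j + 1)

/-- A semistandard Young tableau of shape `sh` (a partition, as a list of row lengths);
entries are positive inside the diagram (cell `(i,j)` with `j < sh_i`), `0` outside;
rows weakly increase, columns strictly increase. -/
structure SSYT (sh : List ℕ) where
  entry : ℕ → ℕ → ℕ
  zero_outside : ∀ i j, sh.getD i 0 ≤ j → entry i j = 0
  pos_inside : ∀ i j, j < sh.getD i 0 → 1 ≤ entry i j
  row_weak : ∀ i j, j + 1 < sh.getD i 0 → entry i j ≤ entry i (j + 1)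
  col_strict : ∀ i j, j < sh.getD (i + 1) 0 → entry i j < entry (i + 1) j

/-- The filling `f` of shape `sh` has weight `mu`: the entry `k+1` occurs `mu_{k+1}` times. -/
def WtIs (sh : List ℕ) (f : ℕ → ℕ → ℕ) (mu : List ℕ) : Prop :=
  ∀ k, {p : ℕ × ℕ | p.2 < sh.getD p.1 0 ∧ f p.1 p.2 = k + 1}.ncard = mu.getD k 0

/-- The Kostka number `K_{ημ}`: the number of SSYT of shape `η` and weight `μ`. -/
noncomputable def kostka (eta mu : List ℕ) : ℕ :=
  Nat.card {T : SSYT eta // WtIs eta T.entry mu}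

/- ### The Lascoux–Schützenberger charge -/

/-- charge of a standard word, given the positions of the letters `1, 2, …` in order:
letter 1 has index 0, and the index of `r+1` equals that of `r`, plus one if `r+1`
is located to the right of `r`; the charge is the sum of the indices. -/
def chargeStdAux : ℕ → ℕ → List ℕ → ℕ
  | _, _, [] => 0
  | prev, ind, p :: rest =>
    let ind' := if prev < p then ind + 1 else ind
    ind' + chargeStdAux p ind' rest

def chargeStd : List ℕ → ℕ
  | [] => 0
  | p :: rest => chargeStdAux p 0 rest

/-- positions of a word of length `n`, read leftwards starting just left of `s`, cyclically. -/
def cycOrder (n s : ℕ) : List ℕ := (List.range s).reverse ++ (List.range' s (n - s)).reverse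

/-- first position, leftwards-cyclically from `s`, carrying the letter `l`. -/
def findCyc (w : List ℕ) (l s : ℕ) : Option ℕ :=
  (cycOrder w.length s).find? fun i => w.getD i 0 = l

def extractAux (w : List ℕ) : ℕ → ℕ → ℕ → List ℕ
  | 0, _, _ => []
  | fuel + 1, s, l =>
    match findCyc w l s with
    | none => []
    | some p => p :: extractAux w fuel p (l + 1)

/-- positions of the extracted standard subword: the rightmost `1`, then cyclically
leftwards the first `2`, then the first `3`, etc. -/
def extract (w : List ℕ) : List ℕ :=
  if 1 ∈ w then
    (w.length - 1 - (w.reverse.findIdx (· = 1))) ::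
      extractAux w (w.foldr max 0) (w.length - 1 - (w.reverse.findIdx (· = 1))) 2
  else []

def removeIdx (w : List ℕ) (I : List ℕ) : List ℕ :=
  ((w.zipIdx.map Prod.swap).filter fun p => p.1 ∉ I).map Prod.snd

def chargeAux : ℕ → List ℕ → ℕ
  | 0, _ => 0
  | fuel + 1, w =>
    if (extract w).isEmpty then 0
    else chargeStd (extract w) + chargeAux fuel (removeIdx w (extract w))

/-- The Lascoux–Schützenberger charge of a word (of partition weight): the sum of the
charges of the successively extracted standard subwords. -/
def charge (w : List ℕ) : ℕ := chargeAux w.length w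

/-- The reading word of a tableau: rows read left to right, starting from the bottom row. -/
def readingWord {sh : List ℕ} (T : SSYT sh) : List ℕ :=
  ((List.range sh.length).reverse.map fun i =>
    (List.range (sh.getD i 0)).map fun j => T.entry i j).flatten

/-- The Kostka–Foulkes polynomial `K_{ηλ}(t) = Σ_T t^{c(T)}`, summed over all SSYT
of shape `η` and weight `λ`, where `c` is the Lascoux–Schützenberger charge. -/
noncomputable def kostkaFoulkes (eta lam : List ℕ) : Polynomial ℤ :=
  ∑ᶠ T : {T : SSYT eta // WtIs eta T.entry lam}, Polynomial.X ^ charge (readingWord T.1)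

/-- `𝒫_{λμ}(t) = Σ_η K_{ημ} K_{ηλ}(t)`, summed over all partitions `η` of `|λ|`. -/
noncomputable def Pcal (lam mu : List ℕ) : Polynomial ℤ :=
  ∑ eta ∈ partitionsOf lam.sum, (kostka eta mu : Polynomial ℤ) * kostkaFoulkes eta lam

/-- `ℛ_{λμ}(t) = Σ_η K_{ημ} K_{η'λ}(t)`, summed over all partitions `η` of `|λ|`. -/
noncomputable def Rcal (lam mu : List ℕ) : Polynomial ℤ :=
  ∑ eta ∈ partitionsOf lam.sum,
    (kostka eta mu : Polynomial ℤ) * kostkaFoulkes (conjList eta) lam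




set_option linter.unusedSectionVars false
set_option maxHeartbeats 1000000

section AuxPoly
open Polynomial Finset

/-- `(q;q)_k` as a polynomial. -/
noncomputable def qpoch (k : ℕ) : Polynomial ℤ := ∏ j ∈ Finset.Icc 1 k, (1 - Polynomial.X ^ j)

lemma qpoch_zero : qpoch 0 = 1 := by simp [qpoch]

lemma qpoch_succ (k : ℕ) : qpoch (k + 1) = qpoch k * (1 - Polynomial.X ^ (k+1)) := by
  rw [qpoch, qpoch, Finset.prod_Icc_succ_top (by omega)]

lemma qpoch_ne_zero (k : ℕ) : qpoch k ≠ 0 := by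
  induction k with
  | zero => simp [qpoch_zero]
  | succ k ih =>
    rw [qpoch_succ]
    refine mul_ne_zero ih (fun h => ?_)
    have := congrArg (Polynomial.eval 0) h
    simp at this

lemma qbinom_zero_right (n : ℕ) : qbinom n 0 = 1 := by cases n <;> rfl

lemma qbinom_of_lt : ∀ {n k : ℕ}, n < k → qbinom n k = 0
  | 0, _ + 1, _ => rfl
  | n + 1, k + 1, h => by
    rw [qbinom, qbinom_of_lt (by omega), qbinom_of_lt (by omega)]
    simp

lemma qbinom_diag : ∀ n, qbinom n n = 1
  | 0 => rfl
  | n + 1 => by rw [qbinom, qbinom_diag n, qbinom_of_lt (show n < n + 1 by omega)]; simp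

lemma qbinom_mul : ∀ n k, k ≤ n → qbinom n k * qpoch k * qpoch (n - k) = qpoch n := by
  intro n
  induction n with
  | zero => intro k hk; interval_cases k; simp [qbinom_zero_right, qpoch_zero]
  | succ n ih =>
    intro k hk
    match k with
    | 0 => simp [qbinom_zero_right, qpoch_zero]
    | k + 1 =>
      rw [qbinom]
      rcases eq_or_lt_of_le hk with h | h
      · have hk' : k = n := by omega
        subst hk'
        rw [qbinom_diag, qbinom_of_lt (show k < k + 1 by omega)]
        simp [qpoch_zero]
      · have hkn : k + 1 ≤ n := by omega
        have h1 : qbinom n k * qpoch k * qpoch (n - k) = qpoch n := ih k (by omega)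
        have h2 : qbinom n (k+1) * qpoch (k+1) * qpoch (n - (k+1)) = qpoch n := ih (k+1) hkn
        have e1 : qpoch (k + 1) = qpoch k * (1 - X ^ (k+1)) := qpoch_succ k
        have e2 : qpoch (n - k) = qpoch (n - (k+1)) * (1 - X ^ (n - k)) := by
          have hh : n - k = (n - (k+1)) + 1 := by omega
          rw [hh, qpoch_succ]
        have e3 : qpoch (n + 1 - (k+1)) = qpoch (n - k) := by congr 1; omega
        rw [e3, add_mul, add_mul, e1]
        calc qbinom n k * (qpoch k * (1 - X ^ (k+1))) * qpoch (n - k) +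
              X ^ (k+1) * qbinom n (k+1) * (qpoch k * (1 - X ^ (k+1))) * qpoch (n - k)
            = (1 - X ^ (k+1)) * (qbinom n k * qpoch k * qpoch (n - k)) +
              (X ^ (k+1) * (1 - X ^ (n-k))) * (qbinom n (k+1) * qpoch (k+1) * qpoch (n - (k+1))) := by
              rw [e1, e2]; ring
          _ = (1 - X ^ (k+1)) * qpoch n + (X ^ (k+1) * (1 - X ^ (n-k))) * qpoch n := by rw [h1, h2]
          _ = qpoch (n+1) := by
              rw [qpoch_succ]
              have : X ^ (k + 1) * X ^ (n - k) = (X : Polynomial ℤ) ^ (n + 1) := by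
                rw [← pow_add]
                congr 1
                omega
              linear_combination (-(qpoch n)) * this


lemma qpoch_def (k : ℕ) : qpoch k = ∏ j ∈ Finset.Icc 1 k, (1 - Polynomial.X ^ j) := rfl

lemma qbinom_pascal (n k : ℕ) (hk : k ≤ n) :
    qbinom (n+1) (k+1) = X ^ (n - k) * qbinom n k + qbinom n (k+1) := by
  rcases eq_or_lt_of_le hk with h | h
  · subst h
    rw [qbinom_diag, qbinom_of_lt (show k < k + 1 by omega), qbinom_diag]
    simp
  · apply mul_right_cancel₀ (mul_ne_zero (qpoch_ne_zero (k+1)) (qpoch_ne_zero (n-k)))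
    have h1 := qbinom_mul n k (by omega)
    have h2 := qbinom_mul n (k+1) (by omega)
    have h3 := qbinom_mul (n+1) (k+1) (by omega)
    have e3 : n + 1 - (k+1) = n - k := by omega
    rw [e3] at h3
    have e1 : qpoch (k + 1) = qpoch k * (1 - X ^ (k+1)) := qpoch_succ k
    have e2 : qpoch (n - k) = qpoch (n - (k+1)) * (1 - X ^ (n - k)) := by
      have hh : n - k = (n - (k+1)) + 1 := by omega
      rw [hh, qpoch_succ]
    have e4 : (X : Polynomial ℤ) ^ (n - k) * X ^ (k + 1) = X ^ (n + 1) := by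
      rw [← pow_add]; congr 1; omega
    calc qbinom (n+1) (k+1) * (qpoch (k+1) * qpoch (n - k))
        = qbinom (n+1) (k+1) * qpoch (k+1) * qpoch (n - k) := by ring
      _ = qpoch (n + 1) := h3
      _ = qpoch n * (1 - X ^ (n+1)) := qpoch_succ n
      _ = X ^ (n-k) * (1 - X ^ (k+1)) * (qbinom n k * qpoch k * qpoch (n - k)) +
          (1 - X ^ (n-k)) * (qbinom n (k+1) * qpoch (k+1) * qpoch (n - (k+1))) := by
          rw [h1, h2]; linear_combination (qpoch n) * e4
      _ = (X ^ (n - k) * qbinom n k + qbinom n (k+1)) * (qpoch (k+1) * qpoch (n - k)) := by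
          rw [e1, e2]; ring

lemma euler_finite {R : Type} [CommRing R] (q t : R) (M : ℕ) :
    ∏ j ∈ Finset.range M, (1 + t * q ^ j) =
      ∑ k ∈ Finset.range (M + 1),
        Polynomial.eval₂ (Int.castRingHom R) q (qbinom M k) * q ^ (k.choose 2) * t ^ k := by
  set Φ : Polynomial ℤ →+* R := Polynomial.eval₂RingHom (Int.castRingHom R) q with hΦ
  have key : ∀ P : Polynomial ℤ, Polynomial.eval₂ (Int.castRingHom R) q P = Φ P := fun _ => rfl
  induction M with
  | zero => simp [qbinom_zero_right 0]
  | succ M ih =>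
    rw [Finset.prod_range_succ, ih]
    simp only [key]
    have hc0 : ∀ m, Φ (qbinom m 0) * q ^ (Nat.choose 0 2) * t ^ 0 = 1 := by
      intro m; rw [qbinom_zero_right]; simp
    have expand : (∑ k ∈ Finset.range (M + 1), Φ (qbinom M k) * q ^ (k.choose 2) * t ^ k)
          * (1 + t * q ^ M)
        = (∑ k ∈ Finset.range (M + 1),
            (Φ (qbinom M (k+1)) * q ^ ((k+1).choose 2)
              + q ^ M * (Φ (qbinom M k) * q ^ (k.choose 2))) * t ^ (k+1)) + 1 := by
      rw [mul_add, mul_one, Finset.sum_mul]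
      have l1 : (∑ k ∈ Finset.range (M + 1), Φ (qbinom M k) * q ^ (k.choose 2) * t ^ k)
          = (∑ k ∈ Finset.range (M + 1), Φ (qbinom M (k+1)) * q ^ ((k+1).choose 2) * t ^ (k+1)) + 1 := by
        rw [Finset.sum_range_succ' (fun k => Φ (qbinom M k) * q ^ (k.choose 2) * t ^ k) M]
        rw [Finset.sum_range_succ (fun k => Φ (qbinom M (k+1)) * q ^ ((k+1).choose 2) * t ^ (k+1)) M]
        rw [qbinom_of_lt (show M < M + 1 by omega)]
        simp [qbinom_zero_right, hc0]
      have l2 : ∀ k ∈ Finset.range (M+1), Φ (qbinom M k) * q ^ (k.choose 2) * t ^ k * (t * q ^ M)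
          = q ^ M * (Φ (qbinom M k) * q ^ (k.choose 2)) * t ^ (k+1) := by intro k _; ring
      rw [l1, Finset.sum_congr rfl l2, add_right_comm, ← Finset.sum_add_distrib]
      congr 1
      apply Finset.sum_congr rfl; intro k _; ring
    rw [expand]
    rw [Finset.sum_range_succ' (fun k => Φ (qbinom (M+1) k) * q ^ (k.choose 2) * t ^ k) (M+1)]
    rw [hc0]
    congr 1
    apply Finset.sum_congr rfl
    intro k hk
    have hkM : k ≤ M := by have := Finset.mem_range.mp hk; omega
    have hch : (k+1).choose 2 = k.choose 2 + k := by
      rw [Nat.choose_succ_succ]; norm_num [Nat.choose_one_right]; omega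
    have hX : Φ X = q := by simp [hΦ]
    rw [qbinom_pascal M k hkM,
      map_add, map_mul, map_pow, hX, hch]
    have hq : q ^ (M - k) * q ^ (k.choose 2 + k) = q ^ M * q ^ (k.choose 2) := by
      rw [← pow_add, ← pow_add]; congr 1; omega
    linear_combination (-(Φ (qbinom M k) * t ^ (k+1))) * hq

end AuxPoly

section AuxPS
open Finset
variable {A : Type} [CommRing A]

def truncIdeal (A : Type) [CommRing A] (d : Fin 2 →₀ ℕ) : Ideal (MvPowerSeries (Fin 2) A) where
  carrier := {s | ∀ e ≤ d, MvPowerSeries.coeff (R := A) e s = 0}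
  zero_mem' := by intro e _; simp
  add_mem' := by intro a b ha hb e he; rw [map_add, ha e he, hb e he, add_zero]
  smul_mem' := by
    intro r s hs e he
    rw [smul_eq_mul, MvPowerSeries.coeff_mul]
    apply Finset.sum_eq_zero
    intro x hx
    rw [Finset.HasAntidiagonal.mem_antidiagonal] at hx
    have hx2 : x.2 ≤ d := le_trans (le_trans le_add_self (le_of_eq hx)) he
    rw [hs x.2 hx2, mul_zero]

lemma coeff_eq_of_quot_eq {d : Fin 2 →₀ ℕ} {a b : MvPowerSeries (Fin 2) A}
    (h : Ideal.Quotient.mk (truncIdeal A d) a = Ideal.Quotient.mk (truncIdeal A d) b) :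
    MvPowerSeries.coeff (R := A) d a = MvPowerSeries.coeff (R := A) d b := by
  have h1 : a - b ∈ truncIdeal A d := Ideal.Quotient.eq.mp h
  have h2 := h1 d le_rfl
  rw [map_sub] at h2
  exact sub_eq_zero.mp h2

lemma X_pow_mem_truncIdeal {d : Fin 2 →₀ ℕ} {s : Fin 2} {m : ℕ} (h : d s < m) :
    (MvPowerSeries.X s : MvPowerSeries (Fin 2) A) ^ m ∈ truncIdeal A d := by
  intro e he
  rw [MvPowerSeries.coeff_X_pow]
  rw [if_neg]
  intro hes
  have : e s = m := by rw [hes]; simp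
  have := le_trans (le_of_eq this.symm) (he s)
  omega

/-- series supported on `q = X 0` only -/
def qonly (φ : MvPowerSeries (Fin 2) A) : Prop :=
  ∀ e : Fin 2 →₀ ℕ, e 1 ≠ 0 → MvPowerSeries.coeff (R := A) e φ = 0

lemma qonly_one : qonly (1 : MvPowerSeries (Fin 2) A) := by
  intro e he
  rw [MvPowerSeries.coeff_one, if_neg]
  intro h; rw [h] at he; simp at he

lemma qonly_C (a : A) : qonly (MvPowerSeries.C (σ := Fin 2) (R := A) a) := by
  intro e he
  rw [MvPowerSeries.coeff_C, if_neg]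
  intro h; rw [h] at he; simp at he

lemma qonly_X0_pow (m : ℕ) : qonly ((MvPowerSeries.X 0 : MvPowerSeries (Fin 2) A) ^ m) := by
  intro e he
  rw [MvPowerSeries.coeff_X_pow, if_neg]
  intro h
  rw [h] at he
  simp [Finsupp.single_apply] at he

lemma qonly_mul {φ ψ : MvPowerSeries (Fin 2) A} (hφ : qonly φ) (hψ : qonly ψ) :
    qonly (φ * ψ) := by
  intro e he
  rw [MvPowerSeries.coeff_mul]
  apply Finset.sum_eq_zero
  intro x hx
  rw [Finset.HasAntidiagonal.mem_antidiagonal] at hx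
  have : x.1 1 + x.2 1 = e 1 := by rw [← hx]; simp
  rcases Nat.eq_zero_or_pos (x.1 1) with h1 | h1
  · have : x.2 1 ≠ 0 := by omega
    rw [hψ x.2 this, mul_zero]
  · rw [hφ x.1 (by omega), zero_mul]

lemma qonly_prod {ι : Type*} (s : Finset ι) (f : ι → MvPowerSeries (Fin 2) A)
    (h : ∀ i ∈ s, qonly (f i)) : qonly (∏ i ∈ s, f i) := by
  classical
  induction s using Finset.induction_on with
  | empty => simpa using qonly_one
  | @insert a s' hx ih =>
    rw [Finset.prod_insert hx]
    exact qonly_mul (h a (Finset.mem_insert_self _ _))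
      (ih fun i hi => h i (Finset.mem_insert_of_mem hi))

lemma qonly_invOfUnit {φ : MvPowerSeries (Fin 2) A}
    (h1 : MvPowerSeries.constantCoeff (σ := Fin 2) (R := A) φ = 1) (hφ : qonly φ) :
    qonly (MvPowerSeries.invOfUnit φ 1) := by
  set ψ := MvPowerSeries.invOfUnit φ 1 with hψdef
  have hmul : φ * ψ = 1 := MvPowerSeries.mul_invOfUnit φ 1 (by rw [h1]; rfl)
  suffices H : ∀ m : ℕ, ∀ e : Fin 2 →₀ ℕ, e 0 + e 1 = m → e 1 ≠ 0 →
      MvPowerSeries.coeff (R := A) e ψ = 0 by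
    intro e he; exact H (e 0 + e 1) e rfl he
  intro m
  induction m using Nat.strong_induction_on with
  | _ m ih =>
    intro e hdeg he
    have he0 : e ≠ 0 := by intro h; rw [h] at he; simp at he
    have hc : MvPowerSeries.coeff (R := A) e (φ * ψ) = 0 := by
      rw [hmul, MvPowerSeries.coeff_one, if_neg he0]
    rw [MvPowerSeries.coeff_mul] at hc
    have hmem : ((0 : Fin 2 →₀ ℕ), e) ∈ Finset.HasAntidiagonal.antidiagonal e := by
      rw [Finset.HasAntidiagonal.mem_antidiagonal]; simp
    rw [← Finset.add_sum_erase _ _ hmem] at hc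
    rw [MvPowerSeries.coeff_zero_eq_constantCoeff_apply, h1, one_mul] at hc
    have hrest : ∑ x ∈ (Finset.HasAntidiagonal.antidiagonal e).erase (0, e),
        MvPowerSeries.coeff (R := A) x.1 φ * MvPowerSeries.coeff (R := A) x.2 ψ = 0 := by
      apply Finset.sum_eq_zero
      intro x hx
      have hx1 := Finset.mem_of_mem_erase hx
      rw [Finset.HasAntidiagonal.mem_antidiagonal] at hx1
      have hxne := Finset.ne_of_mem_erase hx
      rcases Nat.eq_zero_or_pos (x.1 1) with hq | hq
      · -- x.2 1 = e 1 ≠ 0, and deg x.2 < m (since x.1 ≠ 0)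
        have hadd1 : x.1 1 + x.2 1 = e 1 := by rw [← hx1]; simp
        have hadd0 : x.1 0 + x.2 0 = e 0 := by rw [← hx1]; simp
        have hx1ne : x.1 ≠ 0 := by
          intro h0
          apply hxne
          rw [Prod.ext_iff]
          constructor
          · exact h0
          · rw [← hx1, h0, zero_add]
        have hpos : 0 < x.1 0 + x.1 1 := by
          rcases Nat.eq_zero_or_pos (x.1 0 + x.1 1) with h | h
          · exfalso
            apply hx1ne
            ext i
            have h0 : x.1 0 = 0 := by omega
            have h1' : x.1 1 = 0 := by omega
            match i with
            | ⟨0, _⟩ => exact h0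
            | ⟨1, _⟩ => exact h1'
          · exact h
        have : MvPowerSeries.coeff (R := A) x.2 ψ = 0 := by
          apply ih (x.2 0 + x.2 1) (by omega) x.2 rfl (by omega)
        rw [this, mul_zero]
      · rw [hφ x.1 (by omega), zero_mul]
    rw [hrest, add_zero] at hc
    exact hc

lemma coeff_X1_pow_mul_eq_zero {d : Fin 2 →₀ ℕ} {m : ℕ} {g : MvPowerSeries (Fin 2) A}
    (hg : qonly g) (hm : m ≠ d 1) :
    MvPowerSeries.coeff (R := A) d ((MvPowerSeries.X 1 : MvPowerSeries (Fin 2) A) ^ m * g) = 0 := by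
  rw [MvPowerSeries.coeff_mul]
  apply Finset.sum_eq_zero
  intro x hx
  rw [Finset.HasAntidiagonal.mem_antidiagonal] at hx
  rw [MvPowerSeries.coeff_X_pow]
  by_cases h : x.1 = Finsupp.single 1 m
  · rw [if_pos h, one_mul]
    apply hg
    have : x.1 1 + x.2 1 = d 1 := by rw [← hx]; simp
    rw [h] at this
    simp at this
    omega
  · rw [if_neg h, zero_mul]


/-- `(q;q)_k` in the power series ring. -/
noncomputable def qpochPS (A : Type) [CommRing A] (k : ℕ) : MvPowerSeries (Fin 2) A :=
  ∏ j ∈ Finset.Icc 1 k, (1 - (MvPowerSeries.X 0) ^ j)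

lemma constantCoeff_qpochPS (k : ℕ) :
    MvPowerSeries.constantCoeff (σ := Fin 2) (R := A) (qpochPS A k) = 1 := by
  rw [qpochPS, map_prod]
  apply Finset.prod_eq_one
  intro j hj
  have hj1 : 1 ≤ j := (Finset.mem_Icc.mp hj).1
  rw [map_sub, map_one, map_pow, MvPowerSeries.constantCoeff_X, zero_pow (by omega), sub_zero]

/-- the inverse of `(q;q)_k`. -/
noncomputable def Fk (A : Type) [CommRing A] (k : ℕ) : MvPowerSeries (Fin 2) A :=
  MvPowerSeries.invOfUnit (qpochPS A k) 1

lemma mul_Fk (k : ℕ) : qpochPS A k * Fk A k = 1 :=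
  MvPowerSeries.mul_invOfUnit _ 1 (by rw [constantCoeff_qpochPS]; rfl)

lemma qonly_sub {φ ψ : MvPowerSeries (Fin 2) A} (hφ : qonly φ) (hψ : qonly ψ) : qonly (φ - ψ) := by
  intro e he
  rw [map_sub, hφ e he, hψ e he, sub_zero]

lemma qonly_qpochPS (k : ℕ) : qonly (qpochPS A k) := by
  rw [qpochPS]
  apply qonly_prod
  intro j _
  exact qonly_sub qonly_one (qonly_X0_pow j)

lemma qonly_Fk (k : ℕ) : qonly (Fk A k) :=
  qonly_invOfUnit (constantCoeff_qpochPS k) (qonly_qpochPS k)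

/-- the natural map `ℤ[X] → A[[q,z]]`, `X ↦ q`. -/
noncomputable def Phi (A : Type) [CommRing A] : Polynomial ℤ →+* MvPowerSeries (Fin 2) A :=
  Polynomial.eval₂RingHom (Int.castRingHom _) (MvPowerSeries.X 0)

lemma Phi_qpoch (k : ℕ) : Phi A (qpoch k) = qpochPS A k := by
  rw [qpoch_def, qpochPS, map_prod]
  apply Finset.prod_congr rfl
  intro j _
  rw [map_sub, map_one, map_pow]
  congr 1
  simp [Phi]

lemma prod_sub_one_mem_span (s : Finset ℕ) (m : ℕ) (hs : ∀ j ∈ s, m ≤ j) :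
    (∏ j ∈ s, (1 - (MvPowerSeries.X 0 : MvPowerSeries (Fin 2) A) ^ j)) - 1 ∈
      Ideal.span {(MvPowerSeries.X 0 : MvPowerSeries (Fin 2) A) ^ m} := by
  classical
  induction s using Finset.induction_on with
  | empty => simp
  | @insert a s' ha ih =>
    rw [Finset.prod_insert ha]
    have hIH := ih (fun j hj => hs j (Finset.mem_insert_of_mem hj))
    have ham : m ≤ a := hs a (Finset.mem_insert_self _ _)
    have key : (1 - (MvPowerSeries.X 0 : MvPowerSeries (Fin 2) A) ^ a) *
          (∏ j ∈ s', (1 - (MvPowerSeries.X 0 : MvPowerSeries (Fin 2) A) ^ j)) - 1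
        = ((∏ j ∈ s', (1 - (MvPowerSeries.X 0 : MvPowerSeries (Fin 2) A) ^ j)) - 1)
          - ((MvPowerSeries.X 0) ^ (a - m) *
              (∏ j ∈ s', (1 - (MvPowerSeries.X 0 : MvPowerSeries (Fin 2) A) ^ j))) *
            (MvPowerSeries.X 0) ^ m := by
      have : (MvPowerSeries.X 0 : MvPowerSeries (Fin 2) A) ^ (a - m) *
          (MvPowerSeries.X 0) ^ m = (MvPowerSeries.X 0) ^ a := by
        rw [← pow_add]; congr 1; omega
      linear_combination (∏ j ∈ s', (1 - (MvPowerSeries.X 0 : MvPowerSeries (Fin 2) A) ^ j))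
        * this
    rw [key]
    apply Ideal.sub_mem _ hIH
    exact Ideal.mul_mem_left _ _ (Ideal.mem_span_singleton'.mpr ⟨1, one_mul _⟩)

lemma choose_two_succ (k : ℕ) : (k+1).choose 2 = k.choose 2 + k := by
  rw [Nat.choose_succ_succ]; norm_num [Nat.choose_one_right]; omega

lemma le_choose_two_add_one (k : ℕ) : k ≤ k.choose 2 + 1 := by
  cases k with
  | zero => simp
  | succ k => rw [choose_two_succ]; omega

/-- the key congruence. -/
lemma key_congruence {d : Fin 2 →₀ ℕ} {M : ℕ} (hM : d 0 < M) (k : ℕ) :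
    Ideal.Quotient.mk (truncIdeal A d)
        (Phi A (qbinom M k) * (MvPowerSeries.X 0) ^ (k.choose 2)) =
      Ideal.Quotient.mk (truncIdeal A d)
        ((MvPowerSeries.X 0) ^ (k.choose 2) * Fk A k) := by
  rcases le_or_gt k M with hk | hk
  · -- main case
    rw [Ideal.Quotient.eq]
    -- qbinom M k * qpoch k = ∏_{j ∈ Ioc (M-k) M} (1 - X^j)
    have hsplit : qpoch (M - k) * ∏ j ∈ Finset.Ioc (M - k) M, (1 - Polynomial.X ^ j)
        = qpoch M := by
      rw [qpoch_def, qpoch_def]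
      rw [show Finset.Icc 1 (M - k) = Finset.Ioc 0 (M - k) by rw [← Finset.Icc_add_one_left_eq_Ioc]; rfl]
      rw [show Finset.Icc 1 M = Finset.Ioc 0 M by rw [← Finset.Icc_add_one_left_eq_Ioc]; rfl]
      exact Finset.prod_Ioc_consecutive _ (by omega) (by omega)
    have h1 : qbinom M k * qpoch k = ∏ j ∈ Finset.Ioc (M - k) M, (1 - Polynomial.X ^ j) := by
      apply mul_right_cancel₀ (qpoch_ne_zero (M - k))
      calc qbinom M k * qpoch k * qpoch (M - k) = qpoch M := qbinom_mul M k hk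
        _ = (∏ j ∈ Finset.Ioc (M - k) M, (1 - Polynomial.X ^ j)) * qpoch (M - k) := by
            rw [← hsplit]; ring
    -- in the power series ring
    have h2 : Phi A (qbinom M k) * qpochPS A k
        = ∏ j ∈ Finset.Ioc (M - k) M, (1 - (MvPowerSeries.X 0) ^ j) := by
      rw [← Phi_qpoch, ← map_mul, h1, map_prod]
      apply Finset.prod_congr rfl
      intro j _
      rw [map_sub, map_one, map_pow]
      congr 1
      simp [Phi]
    have h3 : Phi A (qbinom M k)
        = (∏ j ∈ Finset.Ioc (M - k) M, (1 - (MvPowerSeries.X 0) ^ j)) * Fk A k := by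
      calc Phi A (qbinom M k) = Phi A (qbinom M k) * (qpochPS A k * Fk A k) := by
            rw [mul_Fk, mul_one]
        _ = (Phi A (qbinom M k) * qpochPS A k) * Fk A k := by ring
        _ = _ := by rw [h2]
    rw [h3]
    have hdiff : (∏ j ∈ Finset.Ioc (M - k) M, (1 - (MvPowerSeries.X 0 : MvPowerSeries (Fin 2) A) ^ j)) * Fk A k *
          (MvPowerSeries.X 0) ^ (k.choose 2) - (MvPowerSeries.X 0) ^ (k.choose 2) * Fk A k
        = (((∏ j ∈ Finset.Ioc (M - k) M, (1 - (MvPowerSeries.X 0) ^ j)) - 1) * Fk A k) *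
            (MvPowerSeries.X 0) ^ (k.choose 2) := by ring
    rw [hdiff]
    have hmem := prod_sub_one_mem_span (A := A) (Finset.Ioc (M - k) M) (M - k + 1)
      (fun j hj => by have := Finset.mem_Ioc.mp hj; omega)
    obtain ⟨r, hr⟩ := Ideal.mem_span_singleton'.mp hmem
    rw [← hr]
    have : r * (MvPowerSeries.X 0 : MvPowerSeries (Fin 2) A) ^ (M - k + 1) * Fk A k *
        (MvPowerSeries.X 0) ^ (k.choose 2)
        = (r * Fk A k) * ((MvPowerSeries.X 0) ^ (M - k + 1 + k.choose 2)) := by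
      rw [pow_add]; ring
    rw [this]
    apply Ideal.mul_mem_left
    apply X_pow_mem_truncIdeal
    have := le_choose_two_add_one k
    omega
  · -- k > M : both sides are zero mod the ideal
    rw [qbinom_of_lt hk, map_zero, zero_mul, map_zero]
    symm
    rw [Ideal.Quotient.eq_zero_iff_mem]
    have hch : d 0 < k.choose 2 := by
      have h1 : (M+1).choose 2 ≤ k.choose 2 := Nat.choose_le_choose 2 (by omega)
      have h2 : (M+1).choose 2 = M.choose 2 + M := choose_two_succ M
      omega
    exact Ideal.mul_mem_right _ _ (X_pow_mem_truncIdeal hch)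

/-- inverse of a product is the product of the inverses -/
lemma invOfUnit_prod {ι : Type*} (s : Finset ι) (f : ι → MvPowerSeries (Fin 2) A)
    (h : ∀ i ∈ s, MvPowerSeries.constantCoeff (σ := Fin 2) (R := A) (f i) = 1) :
    MvPowerSeries.invOfUnit (∏ i ∈ s, f i) 1 = ∏ i ∈ s, MvPowerSeries.invOfUnit (f i) 1 := by
  have hP : MvPowerSeries.constantCoeff (σ := Fin 2) (R := A) (∏ i ∈ s, f i) = 1 := by
    rw [map_prod]; exact Finset.prod_eq_one h
  have h1 : (∏ i ∈ s, f i) * MvPowerSeries.invOfUnit (∏ i ∈ s, f i) 1 = 1 :=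
    MvPowerSeries.mul_invOfUnit _ 1 (by rw [hP]; rfl)
  have h2 : (∏ i ∈ s, f i) * ∏ i ∈ s, MvPowerSeries.invOfUnit (f i) 1 = 1 := by
    rw [← Finset.prod_mul_distrib]
    apply Finset.prod_eq_one
    intro i hi
    exact MvPowerSeries.mul_invOfUnit _ 1 (by rw [h i hi]; rfl)
  calc MvPowerSeries.invOfUnit (∏ i ∈ s, f i) 1
      = MvPowerSeries.invOfUnit (∏ i ∈ s, f i) 1 * ((∏ i ∈ s, f i) * ∏ i ∈ s, MvPowerSeries.invOfUnit (f i) 1) := by rw [h2, mul_one]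
    _ = (∏ i ∈ s, MvPowerSeries.invOfUnit (f i) 1) * ((∏ i ∈ s, f i) * MvPowerSeries.invOfUnit (∏ i ∈ s, f i) 1) := by ring
    _ = ∏ i ∈ s, MvPowerSeries.invOfUnit (f i) 1 := by rw [h1, mul_one]


lemma Fk_zero : Fk A 0 = 1 := by
  have h := mul_Fk (A := A) 0
  rw [qpochPS] at h
  simpa using h

end AuxPS

section AuxPerm
open Finset Equiv

variable {α : Type*} [Fintype α] [DecidableEq α]

def fibEquivFun (p v : α → ℕ) (e : ∀ c : ℕ, {i : α // p i = c} ≃ {i // v i = c}) (i : α) : α :=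
  (e (p i) ⟨i, rfl⟩).1

lemma fibEquivFun_eq (p v : α → ℕ) (e : ∀ c : ℕ, {i : α // p i = c} ≃ {i // v i = c})
    {i : α} {c : ℕ} (h : p i = c) : fibEquivFun p v e i = ((e c) ⟨i, h⟩).1 := by
  subst h; rfl

lemma v_fibEquivFun (p v : α → ℕ) (e : ∀ c : ℕ, {i : α // p i = c} ≃ {i // v i = c}) (i : α) :
    v (fibEquivFun p v e i) = p i := ((e (p i)) ⟨i, rfl⟩).2

def fibPerm (p v : α → ℕ) (e : ∀ c : ℕ, {i : α // p i = c} ≃ {i // v i = c}) : Equiv.Perm α where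
  toFun := fibEquivFun p v e
  invFun := fibEquivFun v p (fun c => (e c).symm)
  left_inv i := by
    rw [fibEquivFun_eq v p _ (v_fibEquivFun p v e i)]
    exact congr_arg Subtype.val ((e (p i)).left_inv ⟨i, rfl⟩)
  right_inv j := by
    rw [fibEquivFun_eq p v _ (v_fibEquivFun v p (fun c => (e c).symm) j)]
    exact congr_arg Subtype.val ((e (v j)).right_inv ⟨j, rfl⟩)

lemma comp_fibPerm (p v : α → ℕ) (e : ∀ c : ℕ, {i : α // p i = c} ≃ {i // v i = c}) :
    v ∘ (fibPerm p v e) = p :=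
  funext fun i => v_fibEquivFun p v e i

lemma fibercard (v : α → ℕ) (c : ℕ) :
    Fintype.card {i : α // v i = c} = Multiset.count c (Multiset.map v Finset.univ.val) := by
  rw [Fintype.card_subtype, Multiset.count_map]
  rw [Finset.card]
  congr 1
  rw [Finset.filter_val]
  apply Multiset.filter_congr
  intro i _
  exact eq_comm

lemma exists_perm_comp (v p : α → ℕ)
    (h : Multiset.map p Finset.univ.val = Multiset.map v Finset.univ.val) :
    ∃ w : Equiv.Perm α, v ∘ w = p := by
  have hcard : ∀ c, Fintype.card {i : α // p i = c} = Fintype.card {i : α // v i = c} := by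
    intro c; rw [fibercard, fibercard, h]
  exact ⟨fibPerm p v (fun c => Fintype.equivOfCardEq (hcard c)), comp_fibPerm _ _ _⟩

lemma card_comp_eq (v p : α → ℕ)
    (h : Multiset.map p Finset.univ.val = Multiset.map v Finset.univ.val) :
    Fintype.card {w : Equiv.Perm α // v ∘ w = p} =
      Fintype.card {w : Equiv.Perm α // v ∘ w = v} := by
  obtain ⟨w₀, hw₀⟩ := exists_perm_comp v p h
  symm
  apply Fintype.card_congr
  refine Equiv.subtypeEquiv (Equiv.mulRight w₀) ?_
  intro w
  constructor
  · intro hw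
    funext x
    have h1 : v (w (w₀ x)) = v (w₀ x) := congrFun hw (w₀ x)
    have h2 : v (w₀ x) = p x := congrFun hw₀ x
    calc v ((Equiv.mulRight w₀ w) x) = v (w (w₀ x)) := rfl
      _ = p x := by rw [h1, h2]
  · intro hw
    funext x
    have h1 : v (w (w₀ (w₀⁻¹ x))) = p (w₀⁻¹ x) := congrFun hw (w₀⁻¹ x)
    have h2 : p (w₀⁻¹ x) = v (w₀ (w₀⁻¹ x)) := (congrFun hw₀ (w₀⁻¹ x)).symm
    have h3 : w₀ (w₀⁻¹ x) = x := Equiv.apply_symm_apply w₀ x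
    rw [h3] at h1 h2
    rw [h2] at h1
    exact h1

lemma card_stab_eq_prod (v : α → ℕ) :
    Fintype.card {w : Equiv.Perm α // v ∘ w = v} =
      ∏ c ∈ Finset.univ.image v, (Fintype.card {i : α // v i = c}).factorial :=
  DomMulAct.stabilizer_card' v

/-- grouping a sum over permutations by the composed function -/
lemma sum_perm_comp {β : Type*} [AddCommMonoid β] (v : α → ℕ) (N : ℕ) (hvN : ∀ i, v i < N)
    (G : (α → ℕ) → β) :
    ∑ w : Equiv.Perm α, G (v ∘ w) =
      ∑ p ∈ (Fintype.piFinset (fun _ : α => Finset.range N)).filter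
          (fun p => Multiset.map p Finset.univ.val = Multiset.map v Finset.univ.val),
        (Fintype.card {w : Equiv.Perm α // v ∘ w = v}) • G p := by
  classical
  set S := (Fintype.piFinset (fun _ : α => Finset.range N)).filter
      (fun p => Multiset.map p Finset.univ.val = Multiset.map v Finset.univ.val) with hS
  have hmaps : ∀ w : Equiv.Perm α, w ∈ (Finset.univ : Finset (Equiv.Perm α)) → v ∘ w ∈ S := by
    intro w _
    rw [hS, Finset.mem_filter]
    constructor
    · rw [Fintype.mem_piFinset]
      intro i
      exact Finset.mem_range.mpr (hvN (w i))
    · have : Multiset.map (⇑w) Finset.univ.val = Finset.univ.val := by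
        have := Finset.map_univ_equiv w
        calc Multiset.map (⇑w) Finset.univ.val = (Finset.univ.map w.toEmbedding).val := rfl
          _ = Finset.univ.val := by rw [this]
      calc Multiset.map (v ∘ ⇑w) Finset.univ.val
          = Multiset.map v (Multiset.map (⇑w) Finset.univ.val) := by
            rw [Multiset.map_map]
        _ = Multiset.map v Finset.univ.val := by rw [this]
  rw [← Finset.sum_fiberwise_of_maps_to hmaps (fun w => G (v ∘ w))]
  apply Finset.sum_congr rfl
  intro p hp
  have hpmul : Multiset.map p Finset.univ.val = Multiset.map v Finset.univ.val :=
    (Finset.mem_filter.mp hp).2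
  have : ∀ w ∈ Finset.univ.filter (fun w : Equiv.Perm α => v ∘ w = p), G (v ∘ w) = G p := by
    intro w hw
    rw [(Finset.mem_filter.mp hw).2]
  rw [Finset.sum_congr rfl this, Finset.sum_const]
  congr 1
  rw [← card_comp_eq v p hpmul, Fintype.card_subtype]


lemma mem_partitionsOf_elim {m : ℕ} {mu : List ℕ} (h : mu ∈ partitionsOf m) :
    mu.reverse.Pairwise (· ≤ ·) ∧ (∀ x ∈ mu, 0 < x) ∧ mu.sum = m := by
  obtain ⟨pt, -, rfl⟩ := Finset.mem_image.mp h
  refine ⟨by rw [List.reverse_reverse]; exact Multiset.pairwise_sort _ _, ?_, ?_⟩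
  · intro x hx
    rw [List.mem_reverse] at hx
    exact pt.parts_pos ((Multiset.mem_sort _).mp hx)
  · rw [List.sum_reverse]
    have h2 : ((Multiset.sort pt.parts (· ≤ ·) : List ℕ) : Multiset ℕ).sum = pt.parts.sum := by
      rw [Multiset.sort_eq]
    rw [Multiset.sum_coe] at h2
    rw [h2, pt.parts_sum]

lemma sortedDesc_mem_partitionsOf {m : ℕ} (s : Multiset ℕ) (hpos : ∀ x ∈ s, 0 < x)
    (hsum : s.sum = m) :
    (Multiset.sort s (· ≤ ·)).reverse ∈ partitionsOf m :=
  Finset.mem_image.mpr ⟨⟨s, fun {x} hx => hpos x hx, hsum⟩, Finset.mem_univ _, rfl⟩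

lemma sort_coe_eq_reverse (mu : List ℕ) (hrev : mu.reverse.Pairwise (· ≤ ·)) :
    Multiset.sort (↑mu : Multiset ℕ) (· ≤ ·) = mu.reverse := by
  apply List.Perm.eq_of_pairwise' (Multiset.pairwise_sort _ _) hrev
  have h1 : ((Multiset.sort (↑mu : Multiset ℕ) (· ≤ ·) : List ℕ) : Multiset ℕ) = ↑mu :=
    Multiset.sort_eq _ _
  exact (Multiset.coe_eq_coe.mp h1).trans (List.reverse_perm mu).symm

lemma mem_le_headD {mu : List ℕ} (hrev : mu.reverse.Pairwise (· ≤ ·)) :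
    ∀ x ∈ mu, x ≤ mu.headD 0 := by
  intro x hx
  match mu with
  | [] => simp at hx
  | a :: t =>
    have hp : (a :: t).Pairwise (fun a b => b ≤ a) := by
      have := List.pairwise_reverse.mpr hrev
      simpa [flip] using this
    rw [List.pairwise_cons] at hp
    rcases List.mem_cons.mp hx with h | h
    · simp [h]
    · simpa using hp.1 x h

lemma ofFn_getD (n : ℕ) (mu : List ℕ) (h : mu.length ≤ n) :
    List.ofFn (fun i : Fin n => mu.getD ↑i 0) = mu ++ List.replicate (n - mu.length) 0 := by
  apply List.ext_getElem
  · simp; omega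
  · intro i h1 h2
    simp only [List.getElem_ofFn]
    rcases lt_or_ge i mu.length with hi | hi
    · rw [List.getElem_append_left hi, List.getD_eq_getElem _ _ hi]
    · rw [List.getElem_append_right hi]
      rw [List.getElem_replicate]
      rw [List.getD_eq_default]
      omega

lemma map_univ_getD (n : ℕ) (mu : List ℕ) (h : mu.length ≤ n) :
    Multiset.map (fun i : Fin n => mu.getD ↑i 0) Finset.univ.val =
      (mu : Multiset ℕ) + Multiset.replicate (n - mu.length) 0 := by
  rw [Fin.univ_val_map, ofFn_getD n mu h, ← Multiset.coe_add, Multiset.coe_replicate]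

lemma count_padded (mu : List ℕ) (hpos : ∀ x ∈ mu, 0 < x) (k c : ℕ) :
    Multiset.count c ((mu : Multiset ℕ) + Multiset.replicate k 0) =
      if c = 0 then k else mu.count c := by
  rw [Multiset.count_add, Multiset.count_replicate]
  by_cases hc : c = 0
  · subst hc
    rw [if_pos rfl, if_pos rfl]
    have : Multiset.count 0 (↑mu : Multiset ℕ) = 0 := by
      rw [Multiset.count_eq_zero]
      intro hmem
      have := hpos 0 (by exact_mod_cast hmem)
      omega
    rw [this, zero_add]
  · rw [if_neg hc, if_neg (fun h => hc h.symm), add_zero]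
    exact Multiset.coe_count _ _

lemma prod_range_getD {β : Type*} [CommMonoid β] (f : ℕ → β) (l : List ℕ) :
    ∏ i ∈ Finset.range l.length, f (l.getD i 0) = (l.map f).prod := by
  induction l with
  | nil => simp
  | cons a t ih =>
    rw [List.length_cons, Finset.prod_range_succ']
    simp only [List.getD_cons_succ, List.getD_cons_zero]
    rw [ih, List.map_cons, List.prod_cons]
    rw [mul_comm]

lemma sum_range_getD {β : Type*} [AddCommMonoid β] (f : ℕ → β) (l : List ℕ) :
    ∑ i ∈ Finset.range l.length, f (l.getD i 0) = (l.map f).sum := by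
  induction l with
  | nil => simp
  | cons a t ih =>
    rw [List.length_cons, Finset.sum_range_succ']
    simp only [List.getD_cons_succ, List.getD_cons_zero]
    rw [ih, List.map_cons, List.sum_cons, add_comm]

lemma prod_comp_padded {n : ℕ} {β : Type*} [CommMonoid β] (f : ℕ → β) (hf : f 0 = 1)
    (p : Fin n → ℕ) (mu : List ℕ) {k : ℕ}
    (hmul : Multiset.map p Finset.univ.val = (mu : Multiset ℕ) + Multiset.replicate k 0) :
    ∏ i : Fin n, f (p i) = ∏ i ∈ Finset.range mu.length, f (mu.getD i 0) := by
  have h1 : ∏ i : Fin n, f (p i) = (Multiset.map (f ∘ p) Finset.univ.val).prod := rfl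
  rw [h1, ← Multiset.map_map, hmul, Multiset.map_add, Multiset.prod_add,
    Multiset.map_replicate, Multiset.prod_replicate, hf, one_pow, mul_one,
    prod_range_getD]
  rw [Multiset.map_coe, Multiset.prod_coe]

lemma sum_comp_padded {n : ℕ} {β : Type*} [AddCommMonoid β] (f : ℕ → β) (hf : f 0 = 0)
    (p : Fin n → ℕ) (mu : List ℕ) {k : ℕ}
    (hmul : Multiset.map p Finset.univ.val = (mu : Multiset ℕ) + Multiset.replicate k 0) :
    ∑ i : Fin n, f (p i) = ∑ i ∈ Finset.range mu.length, f (mu.getD i 0) := by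
  have h1 : ∑ i : Fin n, f (p i) = (Multiset.map (f ∘ p) Finset.univ.val).sum := rfl
  rw [h1, ← Multiset.map_map, hmul, Multiset.map_add, Multiset.sum_add,
    Multiset.map_replicate, Multiset.sum_replicate, hf, smul_zero, add_zero,
    sum_range_getD]
  rw [Multiset.map_coe, Multiset.sum_coe]

lemma filter_padded (mu : List ℕ) (hpos : ∀ x ∈ mu, 0 < x) (k : ℕ) :
    Multiset.filter (fun x => x ≠ 0) ((mu : Multiset ℕ) + Multiset.replicate k 0) = ↑mu := by
  rw [Multiset.filter_add]
  have h1 : Multiset.filter (fun x => x ≠ 0) (↑mu : Multiset ℕ) = ↑mu := by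
    apply Multiset.filter_eq_self.mpr
    intro x hx
    have := hpos x (by exact_mod_cast hx)
    omega
  have h2 : Multiset.filter (fun x => x ≠ 0) (Multiset.replicate k (0:ℕ)) = 0 := by
    apply Multiset.filter_eq_nil.mpr
    intro x hx
    rw [Multiset.eq_of_mem_replicate hx]
    simp
  rw [h1, h2, add_zero]

lemma padded_decomp {n : ℕ} (p : Fin n → ℕ) (mu : List ℕ)
    (hfil : Multiset.filter (fun x => x ≠ 0) (Multiset.map p Finset.univ.val) = ↑mu) :
    Multiset.map p Finset.univ.val = (mu : Multiset ℕ) + Multiset.replicate (n - mu.length) 0 := by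
  have hdec := Multiset.filter_add_not (fun x => x ≠ 0) (Multiset.map p Finset.univ.val)
  have hrep : Multiset.filter (fun x => ¬ x ≠ 0) (Multiset.map p Finset.univ.val) =
      Multiset.replicate (n - mu.length) 0 := by
    rw [Multiset.eq_replicate]
    constructor
    · have hcards := congrArg Multiset.card hdec
      rw [Multiset.card_add, hfil] at hcards
      have htot : Multiset.card (Multiset.map p Finset.univ.val) = n := by
        rw [Multiset.card_map]
        exact Finset.card_univ.trans (Fintype.card_fin n)
      rw [htot] at hcards
      have : Multiset.card (↑mu : Multiset ℕ) = mu.length := rfl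
      omega
    · intro b hb
      have := Multiset.of_mem_filter hb
      omega
  rw [← hfil, ← hrep]
  exact hdec.symm


end AuxPerm

section Stmt2

/-- The monomial symmetric polynomial `m_μ(x_1,…,x_n)` over `ℚ`, written as the orbit
sum `Σ_{w ∈ S_n} x_{w(1)}^{μ_1} ⋯ x_{w(n)}^{μ_n}` divided by the order of the
stabilizer (`m_i(μ)` being the multiplicity of the part `i` in `μ`, with
`m_0(μ) = n − ℓ(μ)`). -/
noncomputable def mSymQ (n : ℕ) (mu : List ℕ) : MvPolynomial (Fin n) ℚ :=
  MvPolynomial.C (((∏ i ∈ Finset.range (mu.headD 0 + 1),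
        Nat.factorial (if i = 0 then n - mu.length else mu.count i) : ℕ) : ℚ))⁻¹ *
    ∑ w : Equiv.Perm (Fin n), ∏ i : Fin n, MvPolynomial.X (w i) ^ mu.getD i 0


open Finset Equiv in
lemma mSymQ_eq_sum (n N : ℕ) (mu : List ℕ) (hrev : mu.reverse.Pairwise (· ≤ ·))
    (hpos : ∀ x ∈ mu, 0 < x) (hlen : mu.length ≤ n) (hN : ∀ x ∈ mu, x < N) (hN0 : 0 < N) :
    mSymQ n mu = ∑ p ∈ (Fintype.piFinset (fun _ : Fin n => Finset.range N)).filter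
        (fun p => Multiset.map p Finset.univ.val =
          (mu : Multiset ℕ) + Multiset.replicate (n - mu.length) 0),
      ∏ i : Fin n, MvPolynomial.X i ^ p i := by
  classical
  set v : Fin n → ℕ := fun i => mu.getD ↑i 0 with hv
  have hvmul : Multiset.map v Finset.univ.val =
      (mu : Multiset ℕ) + Multiset.replicate (n - mu.length) 0 := map_univ_getD n mu hlen
  have hvmem : ∀ i : Fin n, v i = 0 ∨ v i ∈ mu := by
    intro i
    rcases lt_or_ge (↑i : ℕ) mu.length with hi | hi
    · right
      rw [hv]
      simp only
      rw [List.getD_eq_getElem _ _ hi]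
      exact List.getElem_mem _
    · left
      rw [hv]
      simp only
      rw [List.getD_eq_default]
      omega
  have hvN : ∀ i, v i < N := by
    intro i
    rcases hvmem i with h | h
    · omega
    · exact hN _ h
  -- step 1: reindex each product
  have step1 : ∀ w : Equiv.Perm (Fin n),
      ∏ i : Fin n, (MvPolynomial.X (w i) : MvPolynomial (Fin n) ℚ) ^ mu.getD (↑i) 0 =
        ∏ i : Fin n, MvPolynomial.X i ^ v (w.symm i) := by
    intro w
    have := Equiv.prod_comp w (fun j => (MvPolynomial.X j : MvPolynomial (Fin n) ℚ) ^ v (w.symm j))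
    rw [← this]
    apply Finset.prod_congr rfl
    intro i _
    rw [Equiv.symm_apply_apply]
  have step2 : ∑ w : Equiv.Perm (Fin n), ∏ i : Fin n, (MvPolynomial.X (w i) : MvPolynomial (Fin n) ℚ) ^ mu.getD (↑i) 0
      = ∑ w : Equiv.Perm (Fin n), ∏ i : Fin n, MvPolynomial.X i ^ v (w i) := by
    rw [Finset.sum_congr rfl (fun w _ => step1 w)]
    exact Equiv.sum_comp (Equiv.inv (Equiv.Perm (Fin n)))
      (fun w => ∏ i : Fin n, MvPolynomial.X i ^ v (w i))
  have step3 := sum_perm_comp v N hvN (fun p => ∏ i : Fin n, (MvPolynomial.X i : MvPolynomial (Fin n) ℚ) ^ p i)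
  set K := Fintype.card {w : Equiv.Perm (Fin n) // v ∘ w = v} with hK
  -- identify the normalizing constant
  have hKval : (∏ i ∈ Finset.range (mu.headD 0 + 1),
      Nat.factorial (if i = 0 then n - mu.length else mu.count i) : ℕ) = K := by
    rw [hK, card_stab_eq_prod v]
    have hsub : Finset.univ.image v ⊆ Finset.range (mu.headD 0 + 1) := by
      intro c hc
      obtain ⟨i, -, rfl⟩ := Finset.mem_image.mp hc
      rcases hvmem i with h | h
      · rw [h]; simp
      · have := mem_le_headD hrev _ h
        rw [Finset.mem_range]; omega
    have hextras : ∀ c ∈ Finset.range (mu.headD 0 + 1), c ∉ Finset.univ.image v →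
        (if c = 0 then n - mu.length else mu.count c).factorial = 1 := by
      intro c _ hc
      by_cases hc0 : c = 0
      · subst hc0
        rw [if_pos rfl]
        have hzero : n - mu.length = 0 := by
          by_contra hne
          have hlt : mu.length < n := by omega
          have : v ⟨mu.length, hlt⟩ = 0 := by
            rw [hv]
            simp only
            exact List.getD_eq_default _ _ (le_refl _)
          exact hc (Finset.mem_image.mpr ⟨⟨mu.length, hlt⟩, Finset.mem_univ _, this⟩)
        rw [hzero]
        rfl
      · rw [if_neg hc0]
        have : mu.count c = 0 := by
          rw [List.count_eq_zero]
          intro hmem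
          obtain ⟨j, hj, rfl⟩ := List.mem_iff_getElem.mp hmem
          have hjn : j < n := by omega
          have : v ⟨j, hjn⟩ = mu[j] := by
            rw [hv]
            simp only
            rw [List.getD_eq_getElem _ _ hj]
          exact hc (Finset.mem_image.mpr ⟨⟨j, hjn⟩, Finset.mem_univ _, this⟩)
        rw [this]
        rfl
    rw [← Finset.prod_subset hsub hextras]
    apply Finset.prod_congr rfl
    intro c _
    congr 1
    rw [fibercard, hvmul, count_padded mu hpos _ c]
  have hKpos : 0 < K := by
    rw [hK]
    apply Fintype.card_pos_iff.mpr
    exact ⟨⟨1, rfl⟩⟩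
  rw [mSymQ, hKval, step2]
  have step3' : ∑ w : Equiv.Perm (Fin n), ∏ i : Fin n, (MvPolynomial.X i : MvPolynomial (Fin n) ℚ) ^ v (w i)
      = ∑ p ∈ (Fintype.piFinset (fun _ : Fin n => Finset.range N)).filter
          (fun p => Multiset.map p Finset.univ.val =
            (mu : Multiset ℕ) + Multiset.replicate (n - mu.length) 0),
        K • ∏ i : Fin n, (MvPolynomial.X i : MvPolynomial (Fin n) ℚ) ^ p i := by
    rw [← hvmul]
    exact step3
  have hne : ((K : ℚ)) ≠ 0 := Nat.cast_ne_zero.mpr hKpos.ne'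
  rw [step3', ← Finset.smul_sum, nsmul_eq_mul,
    ← map_natCast (MvPolynomial.C : ℚ →+* MvPolynomial (Fin n) ℚ) K, ← mul_assoc,
    ← map_mul, inv_mul_cancel₀ hne, map_one, one_mul]



open Finset in
lemma per_variable (n : ℕ) (d : Fin 2 →₀ ℕ) (M N : ℕ) (hM : d 0 < M) (hNM : M + 1 ≤ N)
    (c : MvPolynomial (Fin n) ℚ) :
    Ideal.Quotient.mk (truncIdeal (MvPolynomial (Fin n) ℚ) d)
      (∏ j ∈ Finset.range M,
        (1 + MvPowerSeries.C (σ := Fin 2) (R := MvPolynomial (Fin n) ℚ) c * MvPowerSeries.X 1 *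
          MvPowerSeries.X 0 ^ j)) =
    Ideal.Quotient.mk (truncIdeal (MvPolynomial (Fin n) ℚ) d)
      (∑ k ∈ Finset.range N,
        MvPowerSeries.X 0 ^ (k.choose 2) * Fk (MvPolynomial (Fin n) ℚ) k *
          (MvPowerSeries.C (σ := Fin 2) (R := MvPolynomial (Fin n) ℚ) c * MvPowerSeries.X 1) ^ k) := by
  rw [euler_finite (MvPowerSeries.X 0 : MvPowerSeries (Fin 2) (MvPolynomial (Fin n) ℚ))
    (MvPowerSeries.C (σ := Fin 2) (R := MvPolynomial (Fin n) ℚ) c * MvPowerSeries.X 1) M]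
  have hext : ∑ k ∈ Finset.range (M+1),
        Polynomial.eval₂ (Int.castRingHom (MvPowerSeries (Fin 2) (MvPolynomial (Fin n) ℚ)))
          (MvPowerSeries.X 0) (qbinom M k) *
          MvPowerSeries.X 0 ^ (k.choose 2) *
          (MvPowerSeries.C (σ := Fin 2) (R := MvPolynomial (Fin n) ℚ) c * MvPowerSeries.X 1) ^ k
      = ∑ k ∈ Finset.range N,
        Polynomial.eval₂ (Int.castRingHom (MvPowerSeries (Fin 2) (MvPolynomial (Fin n) ℚ)))
          (MvPowerSeries.X 0) (qbinom M k) *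
          MvPowerSeries.X 0 ^ (k.choose 2) *
          (MvPowerSeries.C (σ := Fin 2) (R := MvPolynomial (Fin n) ℚ) c * MvPowerSeries.X 1) ^ k := by
    apply Finset.sum_subset (Finset.range_subset_range.mpr hNM)
    intro k hk hk2
    rw [Finset.mem_range] at hk hk2
    rw [qbinom_of_lt (show M < k by omega), Polynomial.eval₂_zero, zero_mul, zero_mul]
  rw [hext, map_sum, map_sum]
  apply Finset.sum_congr rfl
  intro k _
  have hPhi : Polynomial.eval₂ (Int.castRingHom (MvPowerSeries (Fin 2) (MvPolynomial (Fin n) ℚ)))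
      (MvPowerSeries.X 0) (qbinom M k) = Phi (MvPolynomial (Fin n) ℚ) (qbinom M k) := rfl
  rw [hPhi, map_mul, key_congruence hM k, ← map_mul]

open Finset Equiv in
/-- In `ℚ[x_1,…,x_n][[q,z]]` (with `q = X 0`, `z = X 1`),
`∏_{i=1}^{n} ∏_{j=0}^{∞} (1 + z x_i q^j)
  = Σ_μ q^{n(μ')} z^{|μ|} m_μ(x) / ∏_i (q;q)_{μ_i}`,
the sum over all partitions `μ` with at most `n` parts: coefficientwise, each
coefficient of the (q-adically convergent) infinite product — computed from any
sufficiently large finite truncation of it — equals the corresponding coefficient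
of the right-hand side (only the partitions `μ` with `|μ|` equal to the `z`-degree
of the coefficient contribute to it). -/
theorem stmt2 (n : ℕ) (hn : 1 ≤ n) (d : Fin 2 →₀ ℕ) (M : ℕ) (hM : d 0 < M) :
    MvPowerSeries.coeff (R := MvPolynomial (Fin n) ℚ) d
        (∏ i : Fin n, ∏ j ∈ Finset.range M,
          (1 + MvPowerSeries.C (σ := Fin 2) (R := MvPolynomial (Fin n) ℚ) (MvPolynomial.X i) *
              MvPowerSeries.X 1 * MvPowerSeries.X 0 ^ j)) =
      MvPowerSeries.coeff (R := MvPolynomial (Fin n) ℚ) d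
        (∑ mu ∈ (partitionsOf (d 1)).filter (fun l => l.length ≤ n),
          MvPowerSeries.X 0 ^ (∑ i ∈ Finset.range mu.length, Nat.choose (mu.getD i 0) 2) *
            MvPowerSeries.X 1 ^ mu.sum *
            MvPowerSeries.C (σ := Fin 2) (R := MvPolynomial (Fin n) ℚ) (mSymQ n mu) *
            MvPowerSeries.invOfUnit
              (∏ i ∈ Finset.range mu.length,
                ∏ j ∈ Finset.Icc 1 (mu.getD i 0), (1 - MvPowerSeries.X 0 ^ j)) 1) := by
  classical
  set q : MvPowerSeries (Fin 2) (MvPolynomial (Fin n) ℚ) := MvPowerSeries.X 0 with hq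
  set z : MvPowerSeries (Fin 2) (MvPolynomial (Fin n) ℚ) := MvPowerSeries.X 1 with hz
  set CC : MvPolynomial (Fin n) ℚ →+* MvPowerSeries (Fin 2) (MvPolynomial (Fin n) ℚ) :=
    MvPowerSeries.C (σ := Fin 2) (R := MvPolynomial (Fin n) ℚ) with hCC
  set N := max (M + 1) (d 1 + 1) with hN
  have hNM : M + 1 ≤ N := le_max_left _ _
  have hNd : d 1 < N := by
    have := le_max_right (M+1) (d 1 + 1)
    omega
  set T : Fin n → MvPowerSeries (Fin 2) (MvPolynomial (Fin n) ℚ) := fun i =>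
    ∑ k ∈ Finset.range N, q ^ (k.choose 2) * Fk (MvPolynomial (Fin n) ℚ) k *
      (CC (MvPolynomial.X i) * z) ^ k with hT
  set S0 := Fintype.piFinset (fun _ : Fin n => Finset.range N) with hS0
  set W : (Fin n → ℕ) → MvPowerSeries (Fin 2) (MvPolynomial (Fin n) ℚ) := fun p =>
    q ^ (∑ i, (p i).choose 2) *
      (z ^ (∑ i, p i) * (CC (∏ i, MvPolynomial.X i ^ p i) *
        ∏ i, Fk (MvPolynomial (Fin n) ℚ) (p i))) with hW
  -- Step B : reduce to the T-product modulo the truncation ideal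
  have hB : MvPowerSeries.coeff (R := MvPolynomial (Fin n) ℚ) d
        (∏ i : Fin n, ∏ j ∈ Finset.range M, (1 + CC (MvPolynomial.X i) * z * q ^ j))
      = MvPowerSeries.coeff (R := MvPolynomial (Fin n) ℚ) d (∏ i : Fin n, T i) := by
    apply coeff_eq_of_quot_eq
    rw [map_prod, map_prod]
    exact Finset.prod_congr rfl (fun i _ => per_variable n d M N hM hNM (MvPolynomial.X i))
  -- Step C : expand the product of sums
  have hC : (∏ i : Fin n, T i) = ∑ p ∈ S0, W p := by
    rw [hT]
    rw [Finset.prod_univ_sum]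
    apply Finset.sum_congr rfl
    intro p _
    rw [hW]
    have h1 : ∀ i : Fin n, q ^ ((p i).choose 2) * Fk (MvPolynomial (Fin n) ℚ) (p i) *
          (CC (MvPolynomial.X i) * z) ^ (p i)
        = (q ^ ((p i).choose 2)) * (z ^ (p i) * (CC (MvPolynomial.X i ^ (p i)) *
            Fk (MvPolynomial (Fin n) ℚ) (p i))) := by
      intro i
      rw [mul_pow, map_pow]
      ring
    rw [Finset.prod_congr rfl (fun i _ => h1 i)]
    rw [Finset.prod_mul_distrib, Finset.prod_mul_distrib, Finset.prod_mul_distrib]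
    rw [Finset.prod_pow_eq_pow_sum, Finset.prod_pow_eq_pow_sum, ← map_prod]
  rw [hB, hC]
  -- Step E : only the tuples with total weight `d 1` contribute
  have hqonly : ∀ p : Fin n → ℕ, qonly (q ^ (∑ i, (p i).choose 2) *
      (CC (∏ i, MvPolynomial.X i ^ p i) * ∏ i, Fk (MvPolynomial (Fin n) ℚ) (p i))) := by
    intro p
    exact qonly_mul (qonly_X0_pow _)
      (qonly_mul (qonly_C _) (qonly_prod Finset.univ _ (fun i _ => qonly_Fk (p i))))
  have hE : MvPowerSeries.coeff (R := MvPolynomial (Fin n) ℚ) d (∑ p ∈ S0, W p)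
      = MvPowerSeries.coeff (R := MvPolynomial (Fin n) ℚ) d
          (∑ p ∈ S0.filter (fun p => ∑ i, p i = d 1), W p) := by
    rw [map_sum, map_sum]
    symm
    apply Finset.sum_filter_of_ne
    intro p _ hne
    by_contra hsum
    apply hne
    have hWz : W p = z ^ (∑ i, p i) * (q ^ (∑ i, (p i).choose 2) *
        (CC (∏ i, MvPolynomial.X i ^ p i) * ∏ i, Fk (MvPolynomial (Fin n) ℚ) (p i))) := by
      rw [hW]; ring
    rw [hWz]
    exact coeff_X1_pow_mul_eq_zero (hqonly p) hsum
  rw [hE]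
  congr 1
  -- Step F : group the surviving tuples by their sorted value list
  set g : (Fin n → ℕ) → List ℕ := fun p =>
    (Multiset.sort
      (Multiset.filter (fun x => x ≠ 0) (Multiset.map p Finset.univ.val)) (· ≤ ·)).reverse with hg
  have htot : ∀ p : Fin n → ℕ, (Multiset.map p Finset.univ.val).sum = ∑ i, p i := fun p => rfl
  have hcardtot : ∀ p : Fin n → ℕ, Multiset.card (Multiset.map p Finset.univ.val) = n := by
    intro p
    rw [Multiset.card_map]
    exact Finset.card_univ.trans (Fintype.card_fin n)
  have hmaps : ∀ p ∈ S0.filter (fun p => ∑ i, p i = d 1),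
      g p ∈ (partitionsOf (d 1)).filter (fun l => l.length ≤ n) := by
    intro p hp
    have hpsum : ∑ i, p i = d 1 := (Finset.mem_filter.mp hp).2
    rw [Finset.mem_filter]
    constructor
    · apply sortedDesc_mem_partitionsOf
      · intro x hx
        have := Multiset.of_mem_filter hx
        omega
      · -- sum of the filtered multiset
        have hdec := Multiset.filter_add_not (fun x => x ≠ 0) (Multiset.map p Finset.univ.val)
        have hzero : (Multiset.filter (fun x => ¬ x ≠ 0) (Multiset.map p Finset.univ.val)).sum
            = 0 := by
          apply Multiset.sum_eq_zero
          intro x hx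
          have := Multiset.of_mem_filter hx
          omega
        have := congrArg Multiset.sum hdec
        rw [Multiset.sum_add, hzero, add_zero] at this
        rw [this, htot p, hpsum]
    · rw [hg]
      simp only [List.length_reverse, Multiset.length_sort]
      calc Multiset.card (Multiset.filter (fun x => x ≠ 0) (Multiset.map p Finset.univ.val))
          ≤ Multiset.card (Multiset.map p Finset.univ.val) :=
            Multiset.card_le_card (Multiset.filter_le _ _)
        _ = n := hcardtot p
  rw [← Finset.sum_fiberwise_of_maps_to hmaps W]
  apply Finset.sum_congr rfl
  intro mu hmu
  obtain ⟨hmupart, hmulen⟩ := Finset.mem_filter.mp hmu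
  obtain ⟨hrev, hpos, hsum⟩ := mem_partitionsOf_elim hmupart
  -- identify the fiber
  have hfib : (S0.filter (fun p => ∑ i, p i = d 1)).filter (fun p => g p = mu)
      = S0.filter (fun p => Multiset.map p Finset.univ.val =
          (mu : Multiset ℕ) + Multiset.replicate (n - mu.length) 0) := by
    ext p
    simp only [Finset.mem_filter, and_assoc]
    constructor
    · rintro ⟨hp0, hpsum, hpg⟩
      refine ⟨hp0, ?_⟩
      have hcoe : ((g p : List ℕ) : Multiset ℕ)
          = Multiset.filter (fun x => x ≠ 0) (Multiset.map p Finset.univ.val) := by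
        rw [hg]
        simp only
        rw [Multiset.coe_eq_coe.mpr (List.reverse_perm _)]
        exact Multiset.sort_eq _ _
      rw [hpg] at hcoe
      apply padded_decomp
      rw [← hcoe]
    · rintro ⟨hp0, hpmul⟩
      refine ⟨hp0, ?_, ?_⟩
      · have := congrArg Multiset.sum hpmul
        rw [htot p] at this
        rw [Multiset.sum_add] at this
        have hrepl : (Multiset.replicate (n - mu.length) (0:ℕ)).sum = 0 := by
          rw [Multiset.sum_replicate]
          simp
        have hmusum : ((mu : Multiset ℕ)).sum = d 1 := by
          rw [Multiset.sum_coe, hsum]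
        rw [hrepl, add_zero, hmusum] at this
        exact this
      · rw [hg]
        simp only
        rw [hpmul, filter_padded mu hpos, sort_coe_eq_reverse mu hrev, List.reverse_reverse]
  rw [hfib]
  -- evaluate the sum over the fiber
  have hmuN : ∀ x ∈ mu, x < N := by
    intro x hx
    have h1 : x ≤ mu.sum := List.single_le_sum (fun y _ => Nat.zero_le y) x hx
    omega
  have hW' : ∀ p ∈ S0.filter (fun p => Multiset.map p Finset.univ.val =
      (mu : Multiset ℕ) + Multiset.replicate (n - mu.length) 0),
      W p = CC (∏ i, MvPolynomial.X i ^ p i) *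
        (q ^ (∑ i ∈ Finset.range mu.length, (mu.getD i 0).choose 2) *
          (z ^ mu.sum * ∏ i ∈ Finset.range mu.length,
            Fk (MvPolynomial (Fin n) ℚ) (mu.getD i 0))) := by
    intro p hp
    have hpmul : Multiset.map p Finset.univ.val =
        (mu : Multiset ℕ) + Multiset.replicate (n - mu.length) 0 :=
      (Finset.mem_filter.mp hp).2
    have e1 : ∑ i, (p i).choose 2 = ∑ i ∈ Finset.range mu.length, (mu.getD i 0).choose 2 :=
      sum_comp_padded (fun x => x.choose 2) rfl p mu hpmul
    have e2 : ∑ i, p i = mu.sum := by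
      have h2 := congrArg Multiset.sum hpmul
      rw [htot p, Multiset.sum_add, Multiset.sum_coe, Multiset.sum_replicate, smul_zero,
        add_zero] at h2
      exact h2
    have e3 : ∏ i, Fk (MvPolynomial (Fin n) ℚ) (p i)
        = ∏ i ∈ Finset.range mu.length, Fk (MvPolynomial (Fin n) ℚ) (mu.getD i 0) :=
      prod_comp_padded (Fk (MvPolynomial (Fin n) ℚ)) Fk_zero p mu hpmul
    rw [hW]
    simp only
    rw [e1, e2, e3]
    ring
  rw [Finset.sum_congr rfl hW', ← Finset.sum_mul, ← map_sum]
  -- identify the monomial symmetric polynomial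
  have hmsym : mSymQ n mu = ∑ p ∈ S0.filter (fun p => Multiset.map p Finset.univ.val =
      (mu : Multiset ℕ) + Multiset.replicate (n - mu.length) 0),
      ∏ i, MvPolynomial.X i ^ p i :=
    mSymQ_eq_sum n N mu hrev hpos hmulen hmuN (by omega)
  rw [← hmsym]
  -- identify the inverse factor
  have hinv : MvPowerSeries.invOfUnit
      (∏ i ∈ Finset.range mu.length,
        ∏ j ∈ Finset.Icc 1 (mu.getD i 0),
          (1 - (MvPowerSeries.X 0 : MvPowerSeries (Fin 2) (MvPolynomial (Fin n) ℚ)) ^ j)) 1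
      = ∏ i ∈ Finset.range mu.length, Fk (MvPolynomial (Fin n) ℚ) (mu.getD i 0) := by
    have : (∏ i ∈ Finset.range mu.length,
        ∏ j ∈ Finset.Icc 1 (mu.getD i 0),
          (1 - (MvPowerSeries.X 0 : MvPowerSeries (Fin 2) (MvPolynomial (Fin n) ℚ)) ^ j))
        = ∏ i ∈ Finset.range mu.length, qpochPS (MvPolynomial (Fin n) ℚ) (mu.getD i 0) := rfl
    rw [this, invOfUnit_prod _ _ (fun i _ => constantCoeff_qpochPS _)]
    rfl
  rw [hq, hz, hCC] at *
  rw [hinv]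
  ring


end Stmt2

end KHL
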